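/- Let n ≥ 2, μ_1,…,μ_n ∈ ℝ, σ_1,…,σ_n > 0, and let X_1,…,X_n be independent random variables with X_i ~ N(μ_i, σ_i²). For x > 1 set a_x := x^{1/n}/log x and b_x := x^{1/n} (log x)^{1/(n−1)}. Then for all x large enough that b_x ≥ max_j |μ_j|, P( ∏_{j=1}^n X_j ≥ x and |X_i| ≤ a_x for some i ) ≤ Σ_{j=1}^n [ exp(−(b_x−μ_j)²/(2σ_j²)) + exp(−(b_x+μ_j)²/(2σ_j²)) ]. -/

import Mathlib

open MeasureTheory ProbabilityTheory Finset Real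
open scoped NNReal ENNReal

-- Gaussian upper tail bound
lemma gaussian_tail_Ici (m : ℝ) (v : ℝ≥0) (hv : v ≠ 0) {b : ℝ} (hb : m ≤ b) :
    gaussianReal m v (Set.Ici b) ≤ ENNReal.ofReal (Real.exp (-(b - m) ^ 2 / (2 * (v : ℝ)))) := by
  have hvpos : (0:ℝ) < (v:ℝ) := NNReal.coe_pos.mpr (zero_lt_iff.mpr hv)
  rw [gaussianReal_apply_eq_integral _ hv]
  refine ENNReal.ofReal_le_ofReal ?_
  have hC : (0:ℝ) ≤ Real.exp (-(b - m) ^ 2 / (2 * (v : ℝ))) := (Real.exp_pos _).le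
  calc ∫ y in Set.Ici b, gaussianPDFReal m v y
      ≤ ∫ y in Set.Ici b, Real.exp (-(b - m) ^ 2 / (2 * (v : ℝ))) * gaussianPDFReal b v y := by
        refine setIntegral_mono_on ((integrable_gaussianPDFReal m v).integrableOn)
          (((integrable_gaussianPDFReal b v).integrableOn).const_mul _) measurableSet_Ici ?_
        intro y hy
        simp only [gaussianPDFReal]
        have key : rexp (-(y - m) ^ 2 / (2 * (v:ℝ))) ≤
            rexp (-(y - b) ^ 2 / (2 * (v:ℝ))) * rexp (-(b - m) ^ 2 / (2 * (v:ℝ))) := by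
          rw [← Real.exp_add]
          refine Real.exp_le_exp.mpr ?_
          rw [← add_div, div_le_div_iff_of_pos_right (by positivity)]
          have hy' : b ≤ y := hy
          nlinarith [sq_nonneg (y - b), mul_nonneg (sub_nonneg.mpr hy') (sub_nonneg.mpr hb)]
        calc (√(2 * π * (v:ℝ)))⁻¹ * rexp (-(y - m) ^ 2 / (2 * (v:ℝ)))
            ≤ (√(2 * π * (v:ℝ)))⁻¹ *
              (rexp (-(y - b) ^ 2 / (2 * (v:ℝ))) * rexp (-(b - m) ^ 2 / (2 * (v:ℝ)))) :=
              mul_le_mul_of_nonneg_left key (by positivity)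
          _ = rexp (-(b - m) ^ 2 / (2 * (v:ℝ))) *
              ((√(2 * π * (v:ℝ)))⁻¹ * rexp (-(y - b) ^ 2 / (2 * (v:ℝ)))) := by ring
    _ = Real.exp (-(b - m) ^ 2 / (2 * (v : ℝ))) * ∫ y in Set.Ici b, gaussianPDFReal b v y := by
        rw [integral_const_mul]
    _ ≤ Real.exp (-(b - m) ^ 2 / (2 * (v : ℝ))) * 1 := by
        refine mul_le_mul_of_nonneg_left ?_ hC
        rw [← integral_gaussianPDFReal_eq_one b hv]
        exact setIntegral_le_integral (integrable_gaussianPDFReal b v)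
          (ae_of_all _ (gaussianPDFReal_nonneg b v))
    _ = _ := mul_one _

lemma gaussian_tail_Iic (m : ℝ) (v : ℝ≥0) (hv : v ≠ 0) {b : ℝ} (hb : -b ≤ m) :
    gaussianReal m v (Set.Iic (-b)) ≤ ENNReal.ofReal (Real.exp (-(b + m) ^ 2 / (2 * (v : ℝ)))) := by
  have hmap := gaussianReal_map_const_mul (μ := m) (v := v) (-1)
  have hveq : (NNReal.mk ((-1:ℝ)^2) (sq_nonneg _)) = 1 := by ext; norm_num
  rw [hveq, one_mul, neg_one_mul] at hmap
  simp only [neg_one_mul] at hmap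
  have hpre : (fun y : ℝ => -y) ⁻¹' Set.Ici b = Set.Iic (-b) := by
    ext y; simp [le_neg]
  have heq : gaussianReal m v (Set.Iic (-b)) = gaussianReal (-m) v (Set.Ici b) := by
    rw [← hmap, Measure.map_apply (by fun_prop) measurableSet_Ici, hpre]
  rw [heq]
  have h := gaussian_tail_Ici (-m) v hv (b := b) (by linarith)
  simpa [sub_neg_eq_add] using h

lemma prod_lt_aux {n : ℕ} (hn : 2 ≤ n) (y : Fin n → ℝ) {a b x : ℝ} (ha : 0 < a) (hb : 0 < b)
    (hab : a * b ^ (n - 1) = x) (i : Fin n) (hi : |y i| ≤ a) (hall : ∀ j, |y j| < b) :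
    ∏ j, y j < x := by
  have hxpos : 0 < x := by rw [← hab]; positivity
  by_cases hz : ∃ j, y j = 0
  · obtain ⟨j, hj⟩ := hz
    rw [Finset.prod_eq_zero (Finset.mem_univ j) hj]
    exact hxpos
  push_neg at hz
  have habs : ∀ j, 0 < |y j| := fun j => abs_pos.mpr (hz j)
  have hcompl : ({i}ᶜ : Finset (Fin n)).Nonempty := by
    rw [← Finset.card_pos, Finset.card_compl, Finset.card_singleton, Fintype.card_fin]
    omega
  have hsplit : ∏ j, |y j| = |y i| * ∏ j ∈ {i}ᶜ, |y j| := by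
    rw [← Finset.prod_compl_mul_prod ({i} : Finset (Fin n)) (fun j => |y j|),
      Finset.prod_singleton, mul_comm]
  have hP : ∏ j ∈ {i}ᶜ, |y j| < b ^ (n - 1) := by
    have := Finset.prod_lt_prod_of_nonempty (f := fun j => |y j|) (g := fun _ => b)
      (fun j _ => habs j) (fun j _ => hall j) hcompl
    rwa [Finset.prod_const, Finset.card_compl, Finset.card_singleton, Fintype.card_fin] at this
  calc ∏ j, y j ≤ |∏ j, y j| := le_abs_self _
    _ = ∏ j, |y j| := Finset.abs_prod _ _
    _ = |y i| * ∏ j ∈ {i}ᶜ, |y j| := hsplit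
    _ ≤ a * ∏ j ∈ {i}ᶜ, |y j| := by
        refine mul_le_mul_of_nonneg_right hi (Finset.prod_nonneg fun j _ => abs_nonneg _)
    _ < a * b ^ (n - 1) := by exact mul_lt_mul_of_pos_left hP ha
    _ = x := hab


open MeasureTheory ProbabilityTheory Finset

/-- Union bound for the unbalanced region: the probability that the product exceeds `x`
while some coordinate is at most `a_x = x^{1/n}/log x` is bounded by the sum of two-sided
Gaussian tail bounds at level `b_x = x^{1/n} (log x)^{1/(n-1)}`. -/
theorem unbalanced_region_bound
    {Ω : Type*} [MeasureSpace Ω] [IsProbabilityMeasure (ℙ : Measure Ω)]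
    (n : ℕ) (hn : 2 ≤ n) (μ σ : Fin n → ℝ) (hσ : ∀ i, 0 < σ i)
    (X : Fin n → Ω → ℝ)
    (hindep : iIndepFun X ℙ)
    (hlaw : ∀ i, Measure.map (X i) ℙ = gaussianReal (μ i) (Real.toNNReal (σ i ^ 2)))
    (x : ℝ) (hx : 1 < x)
    (hbx : ∀ j, |μ j| ≤ x ^ ((1 : ℝ) / n) * Real.log x ^ ((1 : ℝ) / (n - 1))) :
    (ℙ {ω | x ≤ ∏ j, X j ω ∧ ∃ i, |X i ω| ≤ x ^ ((1 : ℝ) / n) / Real.log x}).toReal ≤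
      ∑ j, (Real.exp (-(x ^ ((1 : ℝ) / n) * Real.log x ^ ((1 : ℝ) / (n - 1)) - μ j) ^ 2 /
              (2 * σ j ^ 2)) +
            Real.exp (-(x ^ ((1 : ℝ) / n) * Real.log x ^ ((1 : ℝ) / (n - 1)) + μ j) ^ 2 /
              (2 * σ j ^ 2))) := by
  have hxpos : (0:ℝ) < x := lt_trans one_pos hx
  have hL : 0 < Real.log x := Real.log_pos hx
  set a : ℝ := x ^ ((1 : ℝ) / n) / Real.log x with ha_def
  set b : ℝ := x ^ ((1 : ℝ) / n) * Real.log x ^ ((1 : ℝ) / (n - 1)) with hb_def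
  have hu : (0:ℝ) < x ^ ((1 : ℝ) / n) := Real.rpow_pos_of_pos hxpos _
  have ha : 0 < a := div_pos hu hL
  have hb : 0 < b := mul_pos hu (Real.rpow_pos_of_pos hL _)
  -- the key algebraic identity a * b^(n-1) = x
  have hcast : ((n - 1 : ℕ) : ℝ) = (n : ℝ) - 1 := by
    have : 1 ≤ n := le_trans one_le_two hn
    push_cast [this]; ring
  have hnne : ((n : ℝ)) ≠ 0 := by positivity
  have hn1ne : ((n : ℝ)) - 1 ≠ 0 := by
    have : (2:ℝ) ≤ n := by exact_mod_cast hn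
    linarith
  have hbpow : b ^ (n - 1) = x ^ (((n:ℝ) - 1) / n) * Real.log x := by
    rw [hb_def, mul_pow, ← Real.rpow_natCast (x ^ ((1:ℝ)/n)) (n-1),
      ← Real.rpow_natCast (Real.log x ^ ((1:ℝ)/((n:ℝ)-1))) (n-1),
      ← Real.rpow_mul hxpos.le, ← Real.rpow_mul hL.le, hcast]
    rw [one_div, one_div, inv_mul_cancel₀ hn1ne, Real.rpow_one]
    congr 1
    field_simp
  have hab : a * b ^ (n - 1) = x := by
    rw [ha_def, hbpow]
    rw [div_mul_eq_mul_div, mul_comm (x ^ ((1:ℝ)/n)) _, mul_assoc, mul_div_assoc,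
      mul_div_cancel_left₀ _ hL.ne']
    rw [← Real.rpow_add hxpos]
    rw [show ((n:ℝ) - 1) / n + 1/n = 1 by field_simp; ring, Real.rpow_one]
  -- variance facts
  set v : Fin n → ℝ≥0 := fun j => Real.toNNReal (σ j ^ 2) with hv_def
  have hvne : ∀ j, v j ≠ 0 := by
    intro j
    simp only [hv_def, ne_eq, Real.toNNReal_eq_zero, not_le]
    exact pow_pos (hσ j) 2
  have hvcoe : ∀ j, ((v j : ℝ)) = σ j ^ 2 := fun j =>
    Real.coe_toNNReal _ (by positivity)
  -- measurability
  have hXm : ∀ j, AEMeasurable (X j) ℙ := fun j =>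
    aemeasurable_of_map_neZero (by rw [hlaw j]; infer_instance)
  -- event inclusion
  have hsub : {ω | x ≤ ∏ j, X j ω ∧ ∃ i, |X i ω| ≤ a} ⊆ ⋃ j, {ω | b ≤ |X j ω|} := by
    intro ω hω
    obtain ⟨hprod, i, hi⟩ := hω
    by_contra hcon
    simp only [Set.mem_iUnion, Set.mem_setOf_eq, not_exists, not_le] at hcon
    exact absurd hprod (not_le.mpr (prod_lt_aux hn (fun j => X j ω) ha hb hab i hi hcon))
  -- tail bounds per coordinate
  have htail : ∀ j, ℙ {ω | b ≤ |X j ω|} ≤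
      ENNReal.ofReal (Real.exp (-(b - μ j) ^ 2 / (2 * σ j ^ 2)) +
        Real.exp (-(b + μ j) ^ 2 / (2 * σ j ^ 2))) := by
    intro j
    have hset : {ω | b ≤ |X j ω|} = X j ⁻¹' (Set.Ici b ∪ Set.Iic (-b)) := by
      ext ω
      simp only [Set.mem_setOf_eq, Set.mem_preimage, Set.mem_union, Set.mem_Ici, Set.mem_Iic,
        le_abs, le_neg]
    have hmono : ℙ (X j ⁻¹' (Set.Ici b ∪ Set.Iic (-b))) ≤
        Measure.map (X j) ℙ (Set.Ici b) + Measure.map (X j) ℙ (Set.Iic (-b)) := by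
      rw [Set.preimage_union]
      refine le_trans (measure_union_le _ _) ?_
      rw [Measure.map_apply_of_aemeasurable (hXm j) measurableSet_Ici,
        Measure.map_apply_of_aemeasurable (hXm j) measurableSet_Iic]
    rw [hlaw j] at hmono
    rw [hset]
    refine le_trans hmono ?_
    have h1 := gaussian_tail_Ici (μ j) (v j) (hvne j) (b := b) (le_trans (le_abs_self _)
      (le_trans (hbx j) (le_of_eq hb_def.symm)))
    have h2 := gaussian_tail_Iic (μ j) (v j) (hvne j) (b := b) (by
      have := hbx j
      rw [abs_le] at this
      linarith [this.1])
    rw [hvcoe j] at h1 h2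
    calc gaussianReal (μ j) (v j) (Set.Ici b) + gaussianReal (μ j) (v j) (Set.Iic (-b))
        ≤ ENNReal.ofReal (Real.exp (-(b - μ j) ^ 2 / (2 * σ j ^ 2))) +
          ENNReal.ofReal (Real.exp (-(b + μ j) ^ 2 / (2 * σ j ^ 2))) := add_le_add h1 h2
      _ = _ := (ENNReal.ofReal_add (Real.exp_pos _).le (Real.exp_pos _).le).symm
  -- put it together
  have hmain : ℙ {ω | x ≤ ∏ j, X j ω ∧ ∃ i, |X i ω| ≤ a} ≤
      ENNReal.ofReal (∑ j, (Real.exp (-(b - μ j) ^ 2 / (2 * σ j ^ 2)) +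
        Real.exp (-(b + μ j) ^ 2 / (2 * σ j ^ 2)))) := by
    refine le_trans (measure_mono hsub) ?_
    refine le_trans (measure_iUnion_le _) ?_
    rw [tsum_fintype, ENNReal.ofReal_sum_of_nonneg (fun j _ => by positivity)]
    exact Finset.sum_le_sum fun j _ => htail j
  refine le_trans (ENNReal.toReal_mono ENNReal.ofReal_ne_top hmain) ?_
  rw [ENNReal.toReal_ofReal (Finset.sum_nonneg fun j _ => by positivity)]
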